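/- Let (Ω, 𝓕, P) be a probability space, let a < b be reals, and let m_n : ℕ → Ω → ([a,b] → ℝ) be a sequence of random functions such that for every n and every ω ∈ Ω the function t ↦ m_n(t)(ω) is monotone nondecreasing on [a,b], and for every t ∈ [a,b] the map ω ↦ m_n(t)(ω) is measurable. Let m : [a,b] → ℝ be a (nonrandom) continuous monotone nondecreasing function. If for every t ∈ [a,b] the real random variables m_n(t) converge to the constant m(t) in probability (i.e., for all ε > 0, P(|m_n(t) − m(t)| > ε) → 0 as n → ∞), then sup_{t ∈ [a,b]} |m_n(t) − m(t)| converges to 0 in probability: for every ε > 0, P(sup_{t ∈ [a,b]} |m_n(t) − m(t)| > ε) → 0 as n → ∞. -/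

import Mathlib

open Filter MeasureTheory

/-- Pointwise convergence in probability of monotone random functions to a
continuous nonrandom monotone limit implies uniform convergence in probability. -/
theorem stmt_5 {Ω : Type*} [MeasurableSpace Ω] (P : Measure Ω) [IsProbabilityMeasure P]
    (a b : ℝ) (hab : a < b)
    (mn : ℕ → Ω → ℝ → ℝ) (m : ℝ → ℝ)
    (hmono : ∀ n, ∀ ω, MonotoneOn (mn n ω) (Set.Icc a b))
    (hmeas : ∀ n, ∀ t ∈ Set.Icc a b, Measurable (fun ω => mn n ω t))
    (hmcont : ContinuousOn m (Set.Icc a b))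
    (hmmono : MonotoneOn m (Set.Icc a b))
    (hconv : ∀ t ∈ Set.Icc a b, ∀ ε : ℝ, 0 < ε →
      Tendsto (fun n => P {ω | ε < |mn n ω t - m t|}) atTop (nhds 0)) :
    ∀ ε : ℝ, 0 < ε →
      Tendsto (fun n => P {ω | ε < ⨆ t : Set.Icc a b, |mn n ω t - m t|})
        atTop (nhds 0) := by
  intro ε hε
  have hba : (0:ℝ) < b - a := by linarith
  -- uniform continuity of m on [a,b]
  have huc : UniformContinuousOn m (Set.Icc a b) :=
    isCompact_Icc.uniformContinuousOn_of_continuous hmcont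
  rw [Metric.uniformContinuousOn_iff] at huc
  obtain ⟨δ, hδ, hδ'⟩ := huc (ε/2) (by linarith)
  obtain ⟨N, hN⟩ := exists_nat_gt ((b - a)/δ)
  have hN0 : (0:ℝ) < N := lt_trans (by positivity) hN
  have hNpos : 0 < N := by exact_mod_cast hN0
  have hmesh : (b - a)/N < δ := by
    have h1 : b - a < N * δ := by
      have := (div_lt_iff₀ hδ).mp hN
      linarith
    rw [div_lt_iff₀ hN0]
    linarith
  set pt : ℕ → ℝ := fun i => a + i * (b - a) / N with hpt
  have hptmem : ∀ i : ℕ, i ≤ N → pt i ∈ Set.Icc a b := by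
    intro i hi
    constructor
    · have : 0 ≤ (i:ℝ) * (b - a) / N := by positivity
      simp only [hpt]; linarith
    · have hiN : (i:ℝ) ≤ N := by exact_mod_cast hi
      have : (i:ℝ) * (b - a) / N ≤ b - a := by
        rw [div_le_iff₀ hN0]
        nlinarith
      simp only [hpt]; linarith
  -- the key inclusion
  have key : ∀ n, {ω | ε < ⨆ t : Set.Icc a b, |mn n ω t - m t|} ⊆
      ⋃ i ∈ Finset.range (N+1), {ω | ε/2 < |mn n ω (pt i) - m (pt i)|} := by
    intro n ω hω
    by_contra hc
    simp only [Set.mem_iUnion, Set.mem_setOf_eq, not_exists, not_lt, Finset.mem_range] at hc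
    have hall : ∀ i : ℕ, i ≤ N → |mn n ω (pt i) - m (pt i)| ≤ ε/2 := by
      intro i hi
      exact hc i (by omega)
    have hbound : (⨆ t : Set.Icc a b, |mn n ω t - m t|) ≤ ε := by
      haveI : Nonempty (Set.Icc a b) := ⟨⟨a, by constructor <;> linarith⟩⟩
      apply ciSup_le
      rintro ⟨t, hta, htb⟩
      simp only
      set x : ℝ := (t - a) * N / (b - a) with hx
      have hx0 : 0 ≤ x := div_nonneg (mul_nonneg (by linarith) hN0.le) hba.le
      have hxN : x ≤ N := by
        rw [hx, div_le_iff₀ hba]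
        nlinarith
      set i : ℕ := min ⌊x⌋₊ (N-1) with hi
      have hiN1 : i ≤ N - 1 := min_le_right _ _
      have hi1N : i + 1 ≤ N := by omega
      have hix : (i:ℝ) ≤ x := by
        have h1 : (i:ℝ) ≤ (⌊x⌋₊ : ℝ) := by exact_mod_cast min_le_left _ _
        exact h1.trans (Nat.floor_le hx0)
      have hxi1 : x ≤ (i:ℝ) + 1 := by
        rcases le_or_gt ⌊x⌋₊ (N-1) with h | h
        · have : i = ⌊x⌋₊ := min_eq_left h
          rw [this]
          exact (Nat.lt_floor_add_one x).le
        · have hieq : i = N - 1 := min_eq_right (by omega)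
          have : (i:ℝ) + 1 = N := by
            rw [hieq]
            have : (N - 1 : ℕ) + 1 = N := by omega
            exact_mod_cast congrArg (Nat.cast : ℕ → ℝ) this
          rw [this]; exact hxN
      have hxval : x * (b - a) = (t - a) * N := div_mul_cancel₀ _ (ne_of_gt hba)
      -- pt i ≤ t
      have hpi : pt i ≤ t := by
        have h1 : (i:ℝ) * (b - a) ≤ x * (b - a) := mul_le_mul_of_nonneg_right hix hba.le
        rw [hxval] at h1
        have h2 : (i:ℝ) * (b - a) / N ≤ t - a := by
          rw [div_le_iff₀ hN0]; nlinarith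
        simp only [hpt]; linarith
      -- t ≤ pt (i+1)
      have hpi1 : t ≤ pt (i+1) := by
        have h1 : x * (b - a) ≤ ((i:ℝ) + 1) * (b - a) := mul_le_mul_of_nonneg_right hxi1 hba.le
        rw [hxval] at h1
        have h2 : t - a ≤ ((i:ℝ) + 1) * (b - a) / N := by
          rw [le_div_iff₀ hN0]; nlinarith
        simp only [hpt]
        push_cast
        linarith
      have hmi : pt i ∈ Set.Icc a b := hptmem i (by omega)
      have hmi1 : pt (i+1) ∈ Set.Icc a b := hptmem (i+1) hi1N
      have ht : t ∈ Set.Icc a b := ⟨hta, htb⟩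
      -- gap bound
      have hgap : |m (pt (i+1)) - m (pt i)| < ε/2 := by
        have hdist : dist (pt (i+1)) (pt i) < δ := by
          rw [Real.dist_eq]
          have hdiff : pt (i+1) - pt i = (b - a) / N := by
            simp only [hpt]; push_cast; ring
          rw [hdiff, abs_of_pos (by positivity)]
          exact hmesh
        have := hδ' (pt (i+1)) hmi1 (pt i) hmi hdist
        rwa [Real.dist_eq] at this
      have hgap' : m (pt (i+1)) - m (pt i) ≤ ε/2 := (le_abs_self _).trans hgap.le
      have hmn0 : mn n ω (pt i) ≤ mn n ω t := hmono n ω hmi ht hpi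
      have hmn1 : mn n ω t ≤ mn n ω (pt (i+1)) := hmono n ω ht hmi1 hpi1
      have hm0 : m (pt i) ≤ m t := hmmono hmi ht hpi
      have hm1 : m t ≤ m (pt (i+1)) := hmmono ht hmi1 hpi1
      have h1 := abs_le.mp (hall i (by omega))
      have h2 := abs_le.mp (hall (i+1) hi1N)
      rw [abs_le]
      constructor <;> [linarith [h1.1, h2.1]; linarith [h1.2, h2.2]]
    exact absurd hω (by simp only [Set.mem_setOf_eq]; exact not_lt.mpr hbound)
  -- union bound and limit
  have hsum : Tendsto (fun n => ∑ i ∈ Finset.range (N+1),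
      P {ω | ε/2 < |mn n ω (pt i) - m (pt i)|}) atTop (nhds 0) := by
    have h := tendsto_finset_sum (Finset.range (N+1))
      (fun i hi => hconv (pt i) (hptmem i (by simp at hi; omega)) (ε/2) (by linarith))
    simpa using h
  have hle : ∀ n, P {ω | ε < ⨆ t : Set.Icc a b, |mn n ω t - m t|} ≤
      ∑ i ∈ Finset.range (N+1), P {ω | ε/2 < |mn n ω (pt i) - m (pt i)|} :=
    fun n => (measure_mono (key n)).trans (measure_biUnion_finset_le _ _)
  exact tendsto_of_tendsto_of_tendsto_of_le_of_le tendsto_const_nhds hsum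
    (fun n => zero_le) hle
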